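/- Let g, ĝ, (h_i)_{i∈ψ} and (ĥ_i)_{i∈φ} all be mutually independent random variables, each exponentially distributed with rate 1, where ψ is a nonempty finite index set and φ ⊆ ψ is nonempty. Fix r>0, α≥2, distances d_i>0, and N≥0, and set η = g r^{-α}/(N + Σ_{i∈ψ} h_i d_i^{-α}) and η̂ = ĝ r^{-α}/(N + Σ_{i∈φ} ĥ_i d_i^{-α}). Then for every T ≥ 0 and every S_th > 0, the cell-edge conditional coverage probability satisfies P(η̂ > T | η < S_th) = e^{-T r^α N} ∏_{i∈φ}(1 + T r^α d_i^{-α})^{-1}, i.e., it equals the frequency-reuse-3 coverage probability. -/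

import Mathlib

open MeasureTheory ProbabilityTheory

open Real Set


section AuxExp

lemma expMeasure_apply' (s : Set ℝ) (hs : MeasurableSet s) :
    expMeasure 1 s = ∫⁻ x in s, exponentialPDF 1 x := by
  rw [expMeasure, gammaMeasure, withDensity_apply _ hs]; rfl

lemma expMeasure_Iio_zero : expMeasure 1 (Iio 0) = 0 := by
  rw [expMeasure_apply' _ measurableSet_Iio]
  exact lintegral_exponentialPDF_of_nonpos le_rfl

lemma expMeasure_singleton_zero : expMeasure 1 {(0:ℝ)} = 0 := by
  rw [expMeasure, gammaMeasure]
  exact (withDensity_absolutelyContinuous _ _) (by simp)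

lemma expMeasure_Iic' {t : ℝ} : expMeasure 1 (Iic t) =
    ENNReal.ofReal (if 0 ≤ t then 1 - Real.exp (-t) else 0) := by
  rw [expMeasure_apply' _ measurableSet_Iic, lintegral_exponentialPDF_eq_antiDeriv one_pos]
  simp

lemma expMeasure_Ioi {t : ℝ} (ht : 0 ≤ t) :
    expMeasure 1 (Ioi t) = ENNReal.ofReal (Real.exp (-t)) := by
  haveI : IsProbabilityMeasure (expMeasure 1) := isProbabilityMeasure_expMeasure one_pos
  rw [← compl_Iic, measure_compl measurableSet_Iic (measure_ne_top _ _), measure_univ,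
    expMeasure_Iic', if_pos ht, ← ENNReal.ofReal_one,
    ← ENNReal.ofReal_sub _ (by nlinarith [Real.exp_le_one_iff.2 (neg_nonpos.2 ht)] :
        (0:ℝ) ≤ 1 - Real.exp (-t))]
  norm_num

lemma expMeasure_Iio_pos {c : ℝ} (hc : 0 < c) : 0 < expMeasure 1 (Iio c) := by
  have h1 : expMeasure 1 (Iic (c/2)) ≤ expMeasure 1 (Iio c) :=
    measure_mono (fun x hx => lt_of_le_of_lt (mem_Iic.1 hx) (by linarith))
  refine lt_of_lt_of_le ?_ h1
  rw [expMeasure_Iic', if_pos (by linarith)]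
  have : Real.exp (-(c/2)) < 1 := Real.exp_lt_one_iff.2 (by linarith)
  exact ENNReal.ofReal_pos.2 (by linarith)

lemma exp_lintegral_expMeasure {s : ℝ} (hs : 0 ≤ s) :
    ∫⁻ x, ENNReal.ofReal (Real.exp (-(s * x))) ∂(expMeasure 1)
      = ENNReal.ofReal (1 + s)⁻¹ := by
  have h1s : (0:ℝ) < 1 + s := by linarith
  have hmeas : Measurable fun x : ℝ => ENNReal.ofReal (Real.exp (-(s * x))) :=
    (Real.continuous_exp.comp (continuous_const.mul continuous_id).neg).measurable.ennreal_ofReal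
  rw [expMeasure, gammaMeasure,
    lintegral_withDensity_eq_lintegral_mul _
      (show Measurable (gammaPDF 1 1) from (measurable_gammaPDFReal 1 1).ennreal_ofReal) hmeas]
  have hpt : ∀ x : ℝ, (gammaPDF 1 1 * fun x => ENNReal.ofReal (Real.exp (-(s * x)))) x
      = ENNReal.ofReal (1 + s)⁻¹ * exponentialPDF (1 + s) x := by
    intro x
    simp only [Pi.mul_apply]
    rcases le_or_gt 0 x with hx | hx
    · have h1 : gammaPDF 1 1 x = exponentialPDF 1 x := rfl
      rw [h1, exponentialPDF_of_nonneg hx, exponentialPDF_of_nonneg hx,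
        ← ENNReal.ofReal_mul (by positivity), ← ENNReal.ofReal_mul (by positivity)]
      congr 1
      rw [one_mul, one_mul, ← Real.exp_add, inv_mul_cancel_left₀ (ne_of_gt h1s)]
      congr 1
      ring
    · have h1 : gammaPDF 1 1 x = exponentialPDF 1 x := rfl
      rw [h1, exponentialPDF_of_neg hx, exponentialPDF_of_neg hx, zero_mul, mul_zero]
  rw [lintegral_congr hpt,
    lintegral_const_mul _
      (show Measurable (exponentialPDF (1+s)) from (measurable_gammaPDFReal 1 (1+s)).ennreal_ofReal),
    lintegral_exponentialPDF_eq_one h1s, mul_one]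

lemma law_ae_nonneg {Ω : Type*} [MeasurableSpace Ω] {μ : Measure Ω} {X : Ω → ℝ}
    (hX : Measurable X) (hlaw : μ.map X = expMeasure 1) : ∀ᵐ ω ∂μ, 0 ≤ X ω := by
  have h0 : μ (X ⁻¹' Iio 0) = 0 := by
    rw [← Measure.map_apply hX measurableSet_Iio, hlaw]; exact expMeasure_Iio_zero
  rw [ae_iff]
  convert h0 using 2
  ext ω; simp [not_le]

lemma law_ae_ne_zero {Ω : Type*} [MeasurableSpace Ω] {μ : Measure Ω} {X : Ω → ℝ}
    (hX : Measurable X) (hlaw : μ.map X = expMeasure 1) : ∀ᵐ ω ∂μ, X ω ≠ 0 := by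
  have h0 : μ (X ⁻¹' {0}) = 0 := by
    rw [← Measure.map_apply hX (measurableSet_singleton 0), hlaw]
    exact expMeasure_singleton_zero
  rw [ae_iff]
  convert h0 using 2
  ext ω; simp

lemma lintegral_finset_prod_of_iIndepFun {Ω ι : Type*} [MeasurableSpace Ω] {μ : Measure Ω}
    [IsProbabilityMeasure μ] {f : ι → Ω → ENNReal}
    (hf : iIndepFun f μ) (hmeas : ∀ i, Measurable (f i))
    (s : Finset ι) :
    ∫⁻ ω, ∏ i ∈ s, f i ω ∂μ = ∏ i ∈ s, ∫⁻ ω, f i ω ∂μ := by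
  classical
  induction s using Finset.induction_on with
  | empty => simp
  | @insert a s ha ih =>
    have hindep : IndepFun (∏ j ∈ s, f j) (f a) μ :=
      iIndepFun.indepFun_finsetProd_of_notMem hf hmeas ha
    have hprodmeas : Measurable (∏ j ∈ s, f j) := by
      convert Finset.measurable_prod s (fun i _ => hmeas i) using 1
      ext ω; simp
    simp only [Finset.prod_insert ha]
    rw [← ih]
    have key := lintegral_mul_eq_lintegral_mul_lintegral_of_indepFun (hmeas a) hprodmeas hindep.symm
    calc ∫⁻ ω, f a ω * ∏ i ∈ s, f i ω ∂μ
        = ∫⁻ ω, (f a * ∏ i ∈ s, f i) ω ∂μ := by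
          apply lintegral_congr; intro ω; simp
      _ = (∫⁻ ω, f a ω ∂μ) * ∫⁻ ω, (∏ i ∈ s, f i) ω ∂μ := key
      _ = (∫⁻ ω, f a ω ∂μ) * ∫⁻ ω, ∏ i ∈ s, f i ω ∂μ := by
          congr 1; apply lintegral_congr; intro ω; simp

end AuxExp


/-- cell-edge conditional coverage probability in the uncorrelated sub-band
case.  With FR1 SINR `η = g r^{-α}/(N + ∑ i, h i * d i^{-α})` (interferers over the whole
nonempty finite index type) and FR3 SINR `η̂ = ĝ r^{-α}/(N + ∑ i ∈ φ, ĥ i * d i^{-α})`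
(interferers over the nonempty subset `φ`), where `g, ĝ, (h i), (ĥ i)_{i ∈ φ}` are mutually
independent unit-rate exponentials, for `T ≥ 0` and `S_th > 0`,
`P(η̂ > T | η < S_th) = e^{-T r^α N} ∏ i ∈ φ, (1 + T r^α d i^{-α})⁻¹`,
i.e. the FR3 coverage probability. -/
theorem cell_edge_conditional_coverage_uncorrelated
    {Ω : Type*} [MeasurableSpace Ω] (μ : Measure Ω) [IsProbabilityMeasure μ]
    {ι : Type*} [Fintype ι] [Nonempty ι]
    (φ : Finset ι) (hφ : φ.Nonempty)
    (g ghat : Ω → ℝ) (h hhat : ι → Ω → ℝ)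
    (hg_meas : Measurable g) (hghat_meas : Measurable ghat)
    (hh_meas : ∀ i, Measurable (h i)) (hhhat_meas : ∀ i, Measurable (hhat i))
    (hg_exp : Measure.map g μ = expMeasure 1)
    (hghat_exp : Measure.map ghat μ = expMeasure 1)
    (hh_exp : ∀ i, Measure.map (h i) μ = expMeasure 1)
    (hhhat_exp : ∀ i ∈ φ, Measure.map (hhat i) μ = expMeasure 1)
    (h_indep : iIndepFun
      (fun x : Bool ⊕ ι ⊕ {i // i ∈ φ} =>
        Sum.elim (fun b => if b then ghat else g)
          (Sum.elim h (fun i => hhat i.1)) x) μ)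
    (r α N : ℝ) (hr : 0 < r) (hα : 2 ≤ α) (hN : 0 ≤ N)
    (d : ι → ℝ) (hd : ∀ i, 0 < d i)
    (T Sth : ℝ) (hT : 0 ≤ T) (hSth : 0 < Sth) :
    ((μ[|{ω | g ω * r ^ (-α) / (N + ∑ i, h i ω * d i ^ (-α)) < Sth}])
        {ω | T < ghat ω * r ^ (-α) / (N + ∑ i ∈ φ, hhat i ω * d i ^ (-α))}).toReal
      = Real.exp (-(T * r ^ α * N)) * ∏ i ∈ φ, (1 + T * r ^ α * d i ^ (-α))⁻¹ := by
  classical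
  set F : (Bool ⊕ ι ⊕ {i // i ∈ φ}) → Ω → ℝ :=
    (fun x : Bool ⊕ ι ⊕ {i // i ∈ φ} =>
      Sum.elim (fun b => if b then ghat else g)
        (Sum.elim h (fun i => hhat i.1)) x) with hF
  have hF_meas : ∀ k, Measurable (F k) := by
    rintro ((_|_) | i | i)
    · exact hg_meas
    · exact hghat_meas
    · exact hh_meas i
    · exact hhhat_meas i.1
  -- basic positivity facts
  have hRpos : (0:ℝ) < r ^ α := Real.rpow_pos_of_pos hr α
  have hrinv : (0:ℝ) < r ^ (-α) := Real.rpow_pos_of_pos hr (-α)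
  have hdinv : ∀ i, (0:ℝ) < d i ^ (-α) := fun i => Real.rpow_pos_of_pos (hd i) (-α)
  have hrr : r ^ α * r ^ (-α) = 1 := by
    rw [← Real.rpow_add hr]; simp
  set A : Set Ω := {ω | g ω * r ^ (-α) / (N + ∑ i, h i ω * d i ^ (-α)) < Sth} with hA
  set B : Set Ω :=
    {ω | T < ghat ω * r ^ (-α) / (N + ∑ i ∈ φ, hhat i ω * d i ^ (-α))} with hB
  have hW : Measurable fun ω => N + ∑ i ∈ φ, hhat i ω * d i ^ (-α) :=
    measurable_const.add (Finset.measurable_sum _ fun i _ => (hhhat_meas i).mul measurable_const)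
  have hA_meas : MeasurableSet A :=
    measurableSet_lt ((hg_meas.mul measurable_const).div
      (measurable_const.add
        (Finset.measurable_sum _ fun i _ => (hh_meas i).mul measurable_const)))
      measurable_const
  -- Step 1 : μ A ≠ 0
  have i1 : ι := Classical.arbitrary ι
  set c0 : ℝ := Sth * d i1 ^ (-α) * r ^ α with hc0
  have hc0pos : 0 < c0 := by
    have := hdinv i1; positivity
  have hEindep : IndepFun g (h i1) μ :=
    h_indep.indepFun (i := Sum.inl false) (j := Sum.inr (Sum.inl i1)) (by simp)
  have hEinter : μ ({ω | g ω < c0} ∩ {ω | 1 < h i1 ω})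
      = μ {ω | g ω < c0} * μ {ω | 1 < h i1 ω} :=
    hEindep.meas_inter ⟨Iio c0, measurableSet_Iio, rfl⟩ ⟨Ioi 1, measurableSet_Ioi, rfl⟩
  have hg_pos : 0 < μ {ω | g ω < c0} := by
    have he : μ {ω | g ω < c0} = expMeasure 1 (Iio c0) := by
      rw [← hg_exp, Measure.map_apply hg_meas measurableSet_Iio]; rfl
    rw [he]; exact expMeasure_Iio_pos hc0pos
  have hh_pos : 0 < μ {ω | 1 < h i1 ω} := by
    have he : μ {ω | 1 < h i1 ω} = expMeasure 1 (Ioi 1) := by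
      rw [← hh_exp i1, Measure.map_apply (hh_meas i1) measurableSet_Ioi]; rfl
    rw [he, expMeasure_Ioi zero_le_one]
    exact ENNReal.ofReal_pos.2 (Real.exp_pos _)
  have hC : ∀ᵐ ω ∂μ, ∀ j, 0 ≤ h j ω :=
    ae_all_iff.2 fun j => law_ae_nonneg (hh_meas j) (hh_exp j)
  have hsub : (({ω | g ω < c0} ∩ {ω | 1 < h i1 ω}) ∩ {ω | ∀ j, 0 ≤ h j ω}) ⊆ A := by
    rintro ω ⟨⟨hgω, hhω⟩, hpos⟩
    simp only [mem_setOf_eq] at hgω hhω hpos ⊢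
    have hterm : d i1 ^ (-α) ≤ h i1 ω * d i1 ^ (-α) := by
      nlinarith [hdinv i1]
    have hsum : d i1 ^ (-α) ≤ ∑ i, h i ω * d i ^ (-α) :=
      le_trans hterm (Finset.single_le_sum
        (f := fun i => h i ω * d i ^ (-α))
        (fun i _ => mul_nonneg (hpos i) (hdinv i).le) (Finset.mem_univ i1))
    have hDge : d i1 ^ (-α) ≤ N + ∑ i, h i ω * d i ^ (-α) := by linarith
    have hDpos : 0 < N + ∑ i, h i ω * d i ^ (-α) := lt_of_lt_of_le (hdinv i1) hDge
    show g ω * r ^ (-α) / (N + ∑ i, h i ω * d i ^ (-α)) < Sth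
    rw [div_lt_iff₀ hDpos]
    rcases lt_or_ge (g ω) 0 with hgneg | hgnn
    · nlinarith
    · have h1 : g ω * r ^ (-α) < c0 * r ^ (-α) := by nlinarith
      have h2 : c0 * r ^ (-α) = Sth * d i1 ^ (-α) := by
        rw [hc0, mul_assoc, hrr, mul_one]
      nlinarith [mul_le_mul_of_nonneg_left hDge hSth.le]
  have hμA_pos : μ A ≠ 0 := by
    have h1 : μ (({ω | g ω < c0} ∩ {ω | 1 < h i1 ω}) ∩ {ω | ∀ j, 0 ≤ h j ω})
        = μ ({ω | g ω < c0} ∩ {ω | 1 < h i1 ω}) :=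
      measure_inter_conull (by rw [Set.compl_setOf]; exact ae_iff.1 hC)
    have hposE : 0 < μ (({ω | g ω < c0} ∩ {ω | 1 < h i1 ω}) ∩ {ω | ∀ j, 0 ≤ h j ω}) := by
      rw [h1, hEinter]
      exact ENNReal.mul_pos hg_pos.ne' hh_pos.ne'
    exact (lt_of_lt_of_le hposE (measure_mono hsub)).ne'
  -- Step 2 : conditioning reduces to μ B
  set S1 : Finset (Bool ⊕ ι ⊕ {i // i ∈ φ}) :=
    insert (Sum.inl false) (Finset.univ.image fun i : ι => Sum.inr (Sum.inl i)) with hS1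
  set S2 : Finset (Bool ⊕ ι ⊕ {i // i ∈ φ}) :=
    insert (Sum.inl true) (φ.attach.image fun i => Sum.inr (Sum.inr i)) with hS2
  have hdisj : Disjoint S1 S2 := by
    rw [Finset.disjoint_left]
    intro a ha1 ha2
    simp only [hS1, hS2, Finset.mem_insert, Finset.mem_image, Finset.mem_univ, true_and,
      Finset.mem_attach] at ha1 ha2
    rcases ha1 with rfl | ⟨i, rfl⟩ <;> rcases ha2 with h' | ⟨j, _, h'⟩ <;> simp_all
  have hT1 : IndepFun (fun ω (k : S1) => F k ω) (fun ω (k : S2) => F k ω) μ :=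
    h_indep.indepFun_finset S1 S2 hdisj hF_meas
  set Φ1 : ({x // x ∈ S1} → ℝ) → ℝ := fun v =>
    v ⟨Sum.inl false, Finset.mem_insert_self _ _⟩ * r ^ (-α) /
      (N + ∑ i : ι, v ⟨Sum.inr (Sum.inl i),
        Finset.mem_insert_of_mem (Finset.mem_image_of_mem _ (Finset.mem_univ i))⟩
          * d i ^ (-α)) with hΦ1
  have hΦ1_meas : Measurable Φ1 :=
    ((measurable_pi_apply _).mul measurable_const).div
      (measurable_const.add
        (Finset.measurable_sum _ fun i _ => (measurable_pi_apply _).mul measurable_const))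
  set Φ2 : ({x // x ∈ S2} → ℝ) → ℝ := fun v =>
    v ⟨Sum.inl true, Finset.mem_insert_self _ _⟩ * r ^ (-α) /
      (N + ∑ i ∈ φ.attach, v ⟨Sum.inr (Sum.inr i),
        Finset.mem_insert_of_mem (Finset.mem_image_of_mem _ (Finset.mem_attach _ i))⟩
          * d i.1 ^ (-α)) with hΦ2
  have hΦ2_meas : Measurable Φ2 :=
    ((measurable_pi_apply _).mul measurable_const).div
      (measurable_const.add
        (Finset.measurable_sum _ fun i _ => (measurable_pi_apply _).mul measurable_const))
  have hA_pre : A = (fun ω (k : S1) => F k ω) ⁻¹' (Φ1 ⁻¹' Iio Sth) := rfl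
  have hB_pre : B = (fun ω (k : S2) => F k ω) ⁻¹' (Φ2 ⁻¹' Ioi T) := by
    ext ω
    simp only [hB, hΦ2, hF, Set.mem_preimage, Set.mem_setOf_eq, Set.mem_Ioi,
      Sum.elim_inl, Sum.elim_inr, if_true]
    rw [Finset.sum_attach φ (fun i => hhat i ω * d i ^ (-α))]
  have hmul : μ (A ∩ B) = μ A * μ B := by
    rw [hA_pre, hB_pre]
    exact hT1.meas_inter ⟨_, hΦ1_meas measurableSet_Iio, rfl⟩
      ⟨_, hΦ2_meas measurableSet_Ioi, rfl⟩
  have hcond : (μ[|A]) B = μ B := by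
    rw [cond_apply hA_meas, hmul, ← mul_assoc,
      ENNReal.inv_mul_cancel hμA_pos (measure_ne_top μ A), one_mul]
  -- Step 3 : compute μ B
  obtain ⟨i0, hi0⟩ := hφ
  have hhat_nonneg : ∀ᵐ ω ∂μ, ∀ i, i ∈ φ → 0 ≤ hhat i ω := by
    rw [ae_all_iff]
    intro i
    by_cases hi : i ∈ φ
    · filter_upwards [law_ae_nonneg (hhhat_meas i) (hhhat_exp i hi)] with ω hω _
      exact hω
    · filter_upwards with ω hmem
      exact absurd hmem hi
  have hhat0 : ∀ᵐ ω ∂μ, hhat i0 ω ≠ 0 := law_ae_ne_zero (hhhat_meas i0) (hhhat_exp i0 hi0)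
  have hWpos : ∀ᵐ ω ∂μ, 0 < N + ∑ i ∈ φ, hhat i ω * d i ^ (-α) := by
    filter_upwards [hhat_nonneg, hhat0] with ω h1 h2
    have hp : 0 < hhat i0 ω := lt_of_le_of_ne (h1 i0 hi0) (Ne.symm h2)
    have hterm : 0 < hhat i0 ω * d i0 ^ (-α) := mul_pos hp (hdinv i0)
    have hsum : hhat i0 ω * d i0 ^ (-α) ≤ ∑ i ∈ φ, hhat i ω * d i ^ (-α) :=
      Finset.single_le_sum (fun i hi => mul_nonneg (h1 i hi) (hdinv i).le) hi0
    linarith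
  have hWnn : ∀ᵐ ω ∂μ, 0 ≤ N + ∑ i ∈ φ, hhat i ω * d i ^ (-α) :=
    hWpos.mono fun ω hw => hw.le
  set B' : Set Ω := {ω | T * r ^ α * (N + ∑ i ∈ φ, hhat i ω * d i ^ (-α)) < ghat ω} with hB'
  have hBB'ae : B =ᵐ[μ] B' := by
    rw [Filter.eventuallyEq_set]
    filter_upwards [hWpos] with ω hw
    simp only [hB, hB', Set.mem_setOf_eq]
    rw [lt_div_iff₀ hw, Real.rpow_neg hr.le, ← div_eq_mul_inv, lt_div_iff₀ hRpos,
      show T * (N + ∑ i ∈ φ, hhat i ω * d i ^ (-α)) * r ^ α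
        = T * r ^ α * (N + ∑ i ∈ φ, hhat i ω * d i ^ (-α)) from by ring]
  have hBB' : μ B = μ B' := measure_congr hBB'ae
  -- independence of ghat and the interference
  set T2 : Finset (Bool ⊕ ι ⊕ {i // i ∈ φ}) :=
    φ.attach.image (fun i => Sum.inr (Sum.inr i)) with hT2
  have hdisj2 : Disjoint ({Sum.inl true} : Finset (Bool ⊕ ι ⊕ {i // i ∈ φ})) T2 := by
    rw [Finset.disjoint_left]
    intro a ha1 ha2
    simp only [Finset.mem_singleton] at ha1
    simp only [hT2, Finset.mem_image, Finset.mem_attach, true_and] at ha2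
    obtain ⟨j, hj⟩ := ha2
    rw [ha1] at hj
    exact absurd hj (by simp)
  have base := h_indep.indepFun_finset {Sum.inl true} T2 hdisj2 hF_meas
  set e1 : ({x // x ∈ ({Sum.inl true} : Finset (Bool ⊕ ι ⊕ {i // i ∈ φ}))} → ℝ) → ℝ :=
    fun v => v ⟨Sum.inl true, Finset.mem_singleton_self _⟩ with he1def
  set e2 : ({x // x ∈ T2} → ℝ) → ℝ :=
    fun v => N + ∑ i ∈ φ.attach, v ⟨Sum.inr (Sum.inr i),
      Finset.mem_image_of_mem _ (Finset.mem_attach _ i)⟩ * d i.1 ^ (-α) with he2def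
  have he1 : Measurable e1 := measurable_pi_apply _
  have he2 : Measurable e2 :=
    measurable_const.add
      (Finset.measurable_sum _ fun i _ => (measurable_pi_apply _).mul measurable_const)
  have hIndepGW : IndepFun ghat (fun ω => N + ∑ i ∈ φ, hhat i ω * d i ^ (-α)) μ := by
    have hcomp := base.comp he1 he2
    have h1 : (e1 ∘ fun ω (k : ({Sum.inl true} : Finset (Bool ⊕ ι ⊕ {i // i ∈ φ}))) => F k ω)
        = ghat := rfl
    have h2 : (e2 ∘ fun ω (k : (T2 : Finset (Bool ⊕ ι ⊕ {i // i ∈ φ}))) => F k ω)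
        = fun ω => N + ∑ i ∈ φ, hhat i ω * d i ^ (-α) := by
      funext ω
      simp only [Function.comp_apply, he2def, hF, Sum.elim_inr]
      rw [Finset.sum_attach φ (fun i => hhat i ω * d i ^ (-α))]
    rwa [h1, h2] at hcomp
  -- pass to the product measure
  set S3 : Set (ℝ × ℝ) := {p : ℝ × ℝ | T * r ^ α * p.2 < p.1} with hS3
  have hS3_meas : MeasurableSet S3 :=
    measurableSet_lt (measurable_snd.const_mul (T * r ^ α)) measurable_fst
  haveI : IsProbabilityMeasure (μ.map (fun ω => N + ∑ i ∈ φ, hhat i ω * d i ^ (-α))) :=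
    Measure.isProbabilityMeasure_map hW.aemeasurable
  have hmap : μ.map (fun ω => (ghat ω, N + ∑ i ∈ φ, hhat i ω * d i ^ (-α)))
      = (μ.map ghat).prod (μ.map (fun ω => N + ∑ i ∈ φ, hhat i ω * d i ^ (-α))) :=
    (indepFun_iff_map_prod_eq_prod_map_map hghat_meas.aemeasurable hW.aemeasurable).1 hIndepGW
  have hmeasexp : Measurable fun y : ℝ => ENNReal.ofReal (Real.exp (-(T * r ^ α * y))) :=
    (Real.continuous_exp.comp (continuous_const.mul continuous_id).neg).measurable.ennreal_ofReal
  have hstep : μ B' = ∫⁻ ω, ENNReal.ofReal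
      (Real.exp (-(T * r ^ α * (N + ∑ i ∈ φ, hhat i ω * d i ^ (-α))))) ∂μ := by
    have h1 : B' = (fun ω => (ghat ω, N + ∑ i ∈ φ, hhat i ω * d i ^ (-α))) ⁻¹' S3 := rfl
    rw [h1, ← Measure.map_apply (hghat_meas.prodMk hW) hS3_meas, hmap,
      Measure.prod_apply_symm hS3_meas, hghat_exp]
    have hslice : ∀ y : ℝ, ((fun x => (x, y)) ⁻¹' S3) = Ioi (T * r ^ α * y) := fun y => rfl
    have hae : ∀ᵐ y ∂(μ.map (fun ω => N + ∑ i ∈ φ, hhat i ω * d i ^ (-α))), 0 ≤ y :=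
      (ae_map_iff hW.aemeasurable measurableSet_Ici).2 hWnn
    rw [lintegral_congr_ae ((hae.mono fun y hy => by
      rw [hslice y, expMeasure_Ioi (by positivity)]))]
    exact lintegral_map hmeasexp hW
  -- factor the integral
  set Tk : (Bool ⊕ ι ⊕ {i // i ∈ φ}) → ℝ → ENNReal :=
    Sum.elim (fun _ _ => 1) (Sum.elim (fun _ _ => 1)
      (fun i x => ENNReal.ofReal (Real.exp (-(T * r ^ α * d i.1 ^ (-α) * x))))) with hTkdef
  have hTk_meas : ∀ k, Measurable (Tk k) := by
    rintro ((_|_) | i | i)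
    · exact measurable_const
    · exact measurable_const
    · exact measurable_const
    · exact (Real.continuous_exp.comp
        (continuous_const.mul continuous_id).neg).measurable.ennreal_ofReal
  have hFk_indep : iIndepFun (fun k => Tk k ∘ F k) μ :=
    h_indep.comp Tk hTk_meas
  have hFk_meas : ∀ k, Measurable (Tk k ∘ F k) := fun k => (hTk_meas k).comp (hF_meas k)
  have hfactor := lintegral_finset_prod_of_iIndepFun hFk_indep hFk_meas T2
  have hinj : ∀ a ∈ φ.attach, ∀ b ∈ φ.attach,
      (Sum.inr (Sum.inr a) : Bool ⊕ ι ⊕ {i // i ∈ φ}) = Sum.inr (Sum.inr b) → a = b :=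
    fun a _ b _ hab => by simpa using hab
  have hpoint : ∀ ω, ENNReal.ofReal
      (Real.exp (-(T * r ^ α * (N + ∑ i ∈ φ, hhat i ω * d i ^ (-α)))))
      = ENNReal.ofReal (Real.exp (-(T * r ^ α * N))) * ∏ k ∈ T2, (Tk k ∘ F k) ω := by
    intro ω
    have h1 : ∏ k ∈ T2, (Tk k ∘ F k) ω
        = ∏ i ∈ φ, ENNReal.ofReal (Real.exp (-(T * r ^ α * d i ^ (-α) * hhat i ω))) := by
      rw [hT2, Finset.prod_image hinj]
      rw [← Finset.prod_attach φ
        (fun i => ENNReal.ofReal (Real.exp (-(T * r ^ α * d i ^ (-α) * hhat i ω))))]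
      exact Finset.prod_congr rfl fun i _ => rfl
    rw [h1, ← ENNReal.ofReal_prod_of_nonneg (fun i _ => Real.exp_nonneg _),
      ← ENNReal.ofReal_mul (Real.exp_nonneg _)]
    congr 1
    rw [← Real.exp_sum, ← Real.exp_add]
    congr 1
    rw [Finset.sum_neg_distrib, ← neg_add]
    congr 1
    rw [mul_add, Finset.mul_sum]
    exact congrArg _ (Finset.sum_congr rfl fun i _ => by ring)
  have hprodmeas2 : Measurable fun ω => ∏ k ∈ T2, (Tk k ∘ F k) ω :=
    Finset.measurable_prod _ fun k _ => hFk_meas k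
  have hint : ∀ i ∈ φ, (∫⁻ ω, ENNReal.ofReal
      (Real.exp (-(T * r ^ α * d i ^ (-α) * hhat i ω))) ∂μ)
      = ENNReal.ofReal (1 + T * r ^ α * d i ^ (-α))⁻¹ := by
    intro i hi
    have hm : Measurable fun x : ℝ => ENNReal.ofReal (Real.exp (-(T * r ^ α * d i ^ (-α) * x))) :=
      (Real.continuous_exp.comp
        (continuous_const.mul continuous_id).neg).measurable.ennreal_ofReal
    rw [← lintegral_map hm (hhhat_meas i), hhhat_exp i hi,
      exp_lintegral_expMeasure (mul_nonneg (mul_nonneg hT hRpos.le) (hdinv i).le)]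
  have hprod_eq : (∏ k ∈ T2, ∫⁻ ω, (Tk k ∘ F k) ω ∂μ)
      = ∏ i ∈ φ, ENNReal.ofReal (1 + T * r ^ α * d i ^ (-α))⁻¹ := by
    rw [hT2, Finset.prod_image hinj,
      ← Finset.prod_attach φ (fun i => ENNReal.ofReal (1 + T * r ^ α * d i ^ (-α))⁻¹)]
    exact Finset.prod_congr rfl fun i _ => hint i.1 i.2
  have hμB_final : μ B = ENNReal.ofReal (Real.exp (-(T * r ^ α * N)))
      * ∏ i ∈ φ, ENNReal.ofReal (1 + T * r ^ α * d i ^ (-α))⁻¹ := by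
    rw [hBB', hstep, lintegral_congr hpoint,
      lintegral_const_mul _ hprodmeas2, hfactor, hprod_eq]
  rw [hcond, hμB_final, ENNReal.toReal_mul, ENNReal.toReal_ofReal (Real.exp_nonneg _),
    ENNReal.toReal_prod]
  refine congrArg _ (Finset.prod_congr rfl fun i _ => ENNReal.toReal_ofReal ?_)
  have h1 : (0:ℝ) ≤ T * r ^ α * d i ^ (-α) :=
    mul_nonneg (mul_nonneg hT hRpos.le) (hdinv i).le
  have h2 : (0:ℝ) < 1 + T * r ^ α * d i ^ (-α) := by linarith
  exact (inv_nonneg).2 h2.le
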